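/- The assignment ⟨u⟩_GW ↦ ⟨u⟩ := 1 + η[u] extends to a well-defined surjective ring homomorphism φ₀ : GW(F) → K^MW_0(F), i.e. the elements ⟨u⟩ in K^MW_0(F) satisfy the Grothendieck-Witt relations: ⟨uv²⟩ = ⟨u⟩, ⟨u⟩ + ⟨-u⟩ = 1 + ⟨-1⟩, and ⟨u⟩ + ⟨v⟩ = ⟨u+v⟩ + ⟨(u+v)uv⟩ when u + v ≠ 0. -/

import Mathlib

noncomputable section

/-- Generators of the Milnor–Witt K-theory ring: a symbol `[u]` for each unit `u`
and the element `η`. -/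
inductive MWGen (F : Type) [Field F] : Type
  | of : Fˣ → MWGen F
  | eta : MWGen F

/-- The defining relations KMW1–KMW4 of Milnor–Witt K-theory, imposed on the free
(noncommutative) ℤ-algebra on the generators. -/
inductive MWRel (F : Type) [Field F] :
    FreeAlgebra ℤ (MWGen F) → FreeAlgebra ℤ (MWGen F) → Prop
  | steinberg (a : Fˣ) (h1 : (a : F) ≠ 1) :
      MWRel F
        (FreeAlgebra.ι ℤ (MWGen.of a) *
          FreeAlgebra.ι ℤ (MWGen.of (Units.mk0 (1 - (a : F)) (sub_ne_zero_of_ne h1.symm))))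
        0
  | mul_rel (a b : Fˣ) :
      MWRel F (FreeAlgebra.ι ℤ (MWGen.of (a * b)))
        (FreeAlgebra.ι ℤ (MWGen.of a) + FreeAlgebra.ι ℤ (MWGen.of b) +
          FreeAlgebra.ι ℤ MWGen.eta * FreeAlgebra.ι ℤ (MWGen.of a) *
            FreeAlgebra.ι ℤ (MWGen.of b))
  | comm_rel (u : Fˣ) :
      MWRel F (FreeAlgebra.ι ℤ MWGen.eta * FreeAlgebra.ι ℤ (MWGen.of u))
        (FreeAlgebra.ι ℤ (MWGen.of u) * FreeAlgebra.ι ℤ MWGen.eta)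
  | hyp :
      MWRel F
        (FreeAlgebra.ι ℤ MWGen.eta *
          (FreeAlgebra.ι ℤ MWGen.eta * FreeAlgebra.ι ℤ (MWGen.of (-1)) + 2))
        0

/-- The Milnor–Witt K-theory ring `K^MW_*(F)` (all degrees together). -/
def KMW (F : Type) [Field F] : Type := RingQuot (MWRel F)

instance (F : Type) [Field F] : Ring (KMW F) := inferInstanceAs (Ring (RingQuot (MWRel F)))

/-- The symbol `[u] ∈ K^MW_1(F)`. -/
def mw {F : Type} [Field F] (u : Fˣ) : KMW F :=
  RingQuot.mkRingHom (MWRel F) (FreeAlgebra.ι ℤ (MWGen.of u))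

/-- The element `η ∈ K^MW_{-1}(F)`. -/
def mweta (F : Type) [Field F] : KMW F :=
  RingQuot.mkRingHom (MWRel F) (FreeAlgebra.ι ℤ MWGen.eta)

/-- The degree-`n` homogeneous component of `K^MW_*(F)`: the additive subgroup spanned
by the monomials `η^m [u₁]⋯[u_r]` with `r - m = n`. -/
def KMWcomp (F : Type) [Field F] (n : ℤ) : AddSubgroup (KMW F) :=
  AddSubgroup.closure {x | ∃ (m r : ℕ) (v : Fin r → Fˣ),
    (r : ℤ) - (m : ℤ) = n ∧ x = (mweta F) ^ m * (List.ofFn fun i => mw (v i)).prod}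

/-- The defining relations of the Grothendieck–Witt ring `GW(F)`, presented as a
commutative ring with generators `⟨u⟩` for `u ∈ Fˣ`: the additive relations
GW1–GW3 together with multiplicativity of the symbols. -/
inductive GWRel (F : Type) [Field F] :
    MvPolynomial Fˣ ℤ → MvPolynomial Fˣ ℤ → Prop
  | sq (u v : Fˣ) : GWRel F (MvPolynomial.X (u * v ^ 2)) (MvPolynomial.X u)
  | hyp (u : Fˣ) :
      GWRel F (MvPolynomial.X u + MvPolynomial.X (-u))
        (1 + MvPolynomial.X (-1 : Fˣ))
  | add (u v : Fˣ) (h : (u : F) + (v : F) ≠ 0) :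
      GWRel F (MvPolynomial.X u + MvPolynomial.X v)
        (MvPolynomial.X (Units.mk0 ((u : F) + (v : F)) h) +
          MvPolynomial.X (Units.mk0 ((u : F) + (v : F)) h * u * v))
  | mul (u v : Fˣ) :
      GWRel F (MvPolynomial.X u * MvPolynomial.X v) (MvPolynomial.X (u * v))
  | one : GWRel F (MvPolynomial.X (1 : Fˣ)) 1

/-- The Grothendieck–Witt ring `GW(F)` of the field `F`, via its presentation. -/
def GW (F : Type) [Field F] : Type := RingQuot (GWRel F)

instance (F : Type) [Field F] : CommRing (GW F) :=
  inferInstanceAs (CommRing (RingQuot (GWRel F)))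

/-- The generator `⟨u⟩ ∈ GW(F)`. -/
def gw {F : Type} [Field F] (u : Fˣ) : GW F :=
  RingQuot.mkRingHom (GWRel F) (MvPolynomial.X u)

/-- The hyperbolic element `h = 1 + ⟨-1⟩ ∈ GW(F)`. -/
def hGW (F : Type) [Field F] : GW F := 1 + gw (-1 : Fˣ)

/-- The Witt ring `W(F) := GW(F)/(h)`. -/
def WittRing (F : Type) [Field F] : Type := GW F ⧸ Ideal.span {hGW F}

instance (F : Type) [Field F] : CommRing (WittRing F) :=
  inferInstanceAs (CommRing (GW F ⧸ Ideal.span {hGW F}))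

/-- The quotient map `GW(F) → W(F)`. -/
def wq (F : Type) [Field F] : GW F →+* WittRing F :=
  Ideal.Quotient.mk (Ideal.span {hGW F})


section Aux
variable {F : Type} [Field F]

lemma mw_mul (a b : Fˣ) :
    mw (a * b) = mw a + mw b + mweta F * mw a * mw b := by
  have := RingQuot.mkRingHom_rel (MWRel.mul_rel (F := F) a b)
  simp only [map_add, map_mul] at this
  exact this

lemma eta_mw_comm (u : Fˣ) : mw u * mweta F = mweta F * mw u := by
  have := RingQuot.mkRingHom_rel (MWRel.comm_rel (F := F) u)
  simp only [map_mul] at this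
  exact this.symm

lemma eta_hyp : mweta F * (mweta F * mw (-1 : Fˣ) + 2) = 0 := by
  have := RingQuot.mkRingHom_rel (MWRel.hyp (F := F))
  simp only [map_add, map_mul, map_ofNat, map_zero] at this
  exact this

lemma mw_steinberg (a : Fˣ) (h1 : (a : F) ≠ 1) :
    mw a * mw (Units.mk0 (1 - (a : F)) (sub_ne_zero_of_ne h1.symm)) = 0 := by
  have := RingQuot.mkRingHom_rel (MWRel.steinberg (F := F) a h1)
  simp only [map_mul, map_zero] at this
  exact this

/-- `Q u = η [u] = ⟨u⟩ - 1`. -/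
def Q (u : Fˣ) : KMW F := mweta F * mw u

lemma mw_eta_swap (u : Fˣ) (x : KMW F) :
    mw u * (mweta F * x) = mweta F * (mw u * x) := by
  rw [← mul_assoc, eta_mw_comm, mul_assoc]

lemma eta_sym (a b : Fˣ) :
    mweta F * (mw a * mw b) = mweta F * (mw b * mw a) := by
  have h1 := mw_mul a b
  have h2 := mw_mul b a
  rw [mul_comm b a] at h2
  have h3 := h1.symm.trans h2
  rw [add_comm (mw b) (mw a)] at h3
  have h4 := add_left_cancel h3
  simpa [mul_assoc] using h4

lemma QQ (a b : Fˣ) : Q a * Q b = mweta F * (mweta F * (mw a * mw b)) := by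
  simp only [Q]
  calc mweta F * mw a * (mweta F * mw b)
      = mweta F * (mw a * (mweta F * mw b)) := by rw [mul_assoc]
    _ = mweta F * (mweta F * (mw a * mw b)) := by rw [mw_eta_swap]

lemma Q_comm (a b : Fˣ) : Q a * Q b = Q b * Q a := by
  rw [QQ, QQ b a, eta_sym]

lemma Q_mul (a b : Fˣ) : Q (a * b) = Q a + Q b + Q a * Q b := by
  rw [QQ]
  simp only [Q]
  rw [mw_mul, mul_add, mul_add, mul_assoc]

lemma Q_hyp (a : Fˣ) : (2 + Q (-1 : Fˣ)) * Q a = 0 := by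
  have h0 : mweta F * (mweta F * mw (-1 : Fˣ)) + 2 * mweta F = 0 := by
    have h := eta_hyp (F := F)
    rw [← h]
    noncomm_ring
  have key : (2 + Q (-1 : Fˣ)) * Q a
      = (mweta F * (mweta F * mw (-1 : Fˣ)) + 2 * mweta F) * mw a := by
    simp only [Q]
    rw [add_mul, mul_assoc (mweta F) (mw (-1 : Fˣ)) (mweta F * mw a), mw_eta_swap]
    noncomm_ring
  rw [key, h0, zero_mul]

lemma Q_steinberg (a : Fˣ) (h1 : (a : F) ≠ 1) :
    Q a * Q (Units.mk0 (1 - (a : F)) (sub_ne_zero_of_ne h1.symm)) = 0 := by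
  rw [QQ, mw_steinberg a h1, mul_zero, mul_zero]

/-- The (commutative) subring of `KMW F` generated by the elements `Q u`. -/
def KMWsub (F : Type) [Field F] : Subring (KMW F) :=
  Subring.closure (Set.range (fun u : Fˣ => Q u))

noncomputable instance (F : Type) [Field F] : CommRing (KMWsub F) :=
  { (inferInstance : Ring (KMWsub F)) with
    mul_comm := (Subring.closureCommRingOfComm (by
      rintro _ ⟨a, rfl⟩ _ ⟨b, rfl⟩
      exact Q_comm a b)).mul_comm }

def qs (u : Fˣ) : KMWsub F := ⟨Q u, Subring.subset_closure ⟨u, rfl⟩⟩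

@[simp] lemma qs_val (u : Fˣ) : ((qs u : KMWsub F) : KMW F) = mweta F * mw u := rfl

lemma hs_mul (a b : Fˣ) : qs (a * b) = qs a + qs b + qs a * qs b := by
  apply Subtype.ext
  push_cast
  exact Q_mul a b

lemma hs_hyp (a : Fˣ) : (2 + qs (-1 : Fˣ)) * qs a = 0 := by
  apply Subtype.ext
  push_cast
  exact Q_hyp a

lemma hs_st (a : Fˣ) (h1 : (a : F) ≠ 1) :
    qs a * qs (Units.mk0 (1 - (a : F)) (sub_ne_zero_of_ne h1.symm)) = 0 := by
  apply Subtype.ext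
  push_cast
  exact Q_steinberg a h1

lemma qs_one : qs (1 : Fˣ) = (0 : KMWsub F) := by
  have h := hs_mul (F := F) (-1 : Fˣ) (-1)
  rw [neg_mul_neg, one_mul] at h
  linear_combination h + hs_hyp (F := F) (-1 : Fˣ)

lemma qs_inv (u : Fˣ) : qs u + qs u⁻¹ + qs u * qs u⁻¹ = (0 : KMWsub F) := by
  have h := hs_mul (F := F) u u⁻¹
  rw [mul_inv_cancel] at h
  linear_combination qs_one (F := F) - h

lemma qs_negmul (u : Fˣ) : qs u * qs (-u) = (0 : KMWsub F) := by
  by_cases h : (u : F) = 1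
  · have hu : u = 1 := Units.ext h
    subst hu
    rw [qs_one, zero_mul]
  · have hu1 : u ≠ 1 := fun e => h (by rw [e]; rfl)
    have hinv : ((u⁻¹ : Fˣ) : F) ≠ 1 := by
      rw [Ne, Units.val_eq_one, inv_eq_one]
      exact hu1
    have st1 := hs_st u h
    have st2 := hs_st u⁻¹ hinv
    set a : Fˣ := Units.mk0 (1 - (u : F)) (sub_ne_zero_of_ne (Ne.symm h)) with ha
    set b : Fˣ := Units.mk0 (1 - ((u⁻¹ : Fˣ) : F)) (sub_ne_zero_of_ne (Ne.symm hinv)) with hb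
    have qb : qs u * qs b = (0 : KMWsub F) := by
      linear_combination qs b * qs_inv (F := F) u - (1 + qs u) * st2
    have qbi : qs u * qs b⁻¹ = (0 : KMWsub F) := by
      linear_combination qs u * qs_inv (F := F) b - (1 + qs b⁻¹) * qb
    have hneg : (-u : Fˣ) = a * b⁻¹ := by
      rw [eq_mul_inv_iff_mul_eq]
      apply Units.ext
      rw [Units.val_mul, Units.val_neg, ha, hb]
      simp only [Units.val_mk0, Units.val_inv_eq_inv_val]
      have hc : (u : F) * ((u : F))⁻¹ = 1 := mul_inv_cancel₀ (Units.ne_zero u)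
      linear_combination hc
    have hq := hs_mul a b⁻¹
    rw [← hneg] at hq
    linear_combination qs u * hq + (1 + qs b⁻¹) * st1 + qbi

lemma qs_sq (v : Fˣ) : 2 * qs v + qs v * qs v = (0 : KMWsub F) := by
  have h1 := hs_mul (F := F) (-1 : Fˣ) (-v)
  rw [neg_mul_neg, one_mul] at h1
  linear_combination hs_hyp (F := F) v + qs v * h1 + (1 + qs (-1 : Fˣ)) * qs_negmul (F := F) v

lemma goal1S (u v : Fˣ) : (1 : KMWsub F) + qs (u * v ^ 2) = 1 + qs u := by
  have h1 := hs_mul (F := F) u (v ^ 2)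
  have h2 := hs_mul (F := F) v v
  rw [← sq] at h2
  linear_combination h1 + (1 + qs u) * h2 + (1 + qs u) * qs_sq (F := F) v

lemma goal2S (u : Fˣ) :
    ((1 : KMWsub F) + qs u) + (1 + qs (-u)) = 1 + (1 + qs (-1 : Fˣ)) := by
  have h1 := hs_mul (F := F) (-1 : Fˣ) u
  rw [neg_one_mul] at h1
  linear_combination h1 + hs_hyp (F := F) u

lemma goal3S (u v : Fˣ) (h : (u : F) + (v : F) ≠ 0) :
    ((1 : KMWsub F) + qs u) + (1 + qs v) =
      (1 + qs (Units.mk0 ((u : F) + (v : F)) h)) +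
        (1 + qs (Units.mk0 ((u : F) + (v : F)) h * u * v)) := by
  set s : Fˣ := Units.mk0 ((u : F) + (v : F)) h with hs
  have hu1 : ((u * s⁻¹ : Fˣ) : F) ≠ 1 := by
    rw [Ne, Units.val_mul, Units.val_inv_eq_inv_val, hs, Units.val_mk0,
      mul_inv_eq_one₀ h]
    intro he
    exact Units.ne_zero v (by linear_combination -he)
  have st0 := hs_st (u * s⁻¹) hu1
  have harg : Units.mk0 (1 - ((u * s⁻¹ : Fˣ) : F)) (sub_ne_zero_of_ne hu1.symm)
      = v * s⁻¹ := by
    apply Units.ext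
    simp only [Units.val_mk0, Units.val_mul, Units.val_inv_eq_inv_val, hs]
    field_simp
    ring
  rw [harg] at st0
  have hu' := hs_mul (F := F) (u * s⁻¹) s
  rw [inv_mul_cancel_right] at hu'
  have hv' := hs_mul (F := F) (v * s⁻¹) s
  rw [inv_mul_cancel_right] at hv'
  have hab := hs_mul (F := F) (u * s⁻¹) (v * s⁻¹)
  have hs2 := hs_mul (F := F) s s
  have hs3 := hs_mul (F := F) (s * s) s
  have harg2 : ((u * s⁻¹) * (v * s⁻¹)) * ((s * s) * s) = s * u * v := by
    apply Units.ext
    simp only [Units.val_mul, Units.val_inv_eq_inv_val, hs, Units.val_mk0]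
    field_simp
  have hsuv := hs_mul (F := F) ((u * s⁻¹) * (v * s⁻¹)) ((s * s) * s)
  rw [harg2] at hsuv
  rw [hu', hv', hsuv, hab, hs3, hs2]
  linear_combination (-((1 + qs s) ^ 3)) * st0 +
    (-((1 + qs s) * (1 + qs (u * s⁻¹) + qs (v * s⁻¹)))) * qs_sq (F := F) s

lemma mulS (u v : Fˣ) :
    ((1 : KMWsub F) + qs u) * (1 + qs v) = 1 + qs (u * v) := by
  linear_combination -(hs_mul (F := F) u v)

lemma comm_eta_mw_c (u : Fˣ) : Commute (mweta F) (mw u) := (eta_mw_comm u).symm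

lemma comm_swap {a b x : KMW F} (h : Commute a b) :
    b * (a * x) = a * (b * x) := by
  rw [← mul_assoc, ← h.eq, mul_assoc]

lemma comm_eta_prod (r : ℕ) (v : Fin r → Fˣ) :
    Commute (mweta F) ((List.ofFn fun i => mw (v i)).prod) := by
  apply Commute.list_prod_right
  intro y hy
  rw [List.mem_ofFn] at hy
  obtain ⟨i, rfl⟩ := hy
  exact comm_eta_mw_c (v i)

lemma ofFn_snoc_prod (r : ℕ) (v : Fin r → Fˣ) (u : Fˣ) :
    (List.ofFn fun i : Fin (r + 1) => mw ((Fin.snoc v u : Fin (r+1) → Fˣ) i)).prod =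
      (List.ofFn fun i => mw (v i)).prod * mw u := by
  rw [List.ofFn_succ']
  simp [Function.comp_def, Fin.snoc_castSucc, Fin.snoc_last]

lemma gen_mul_Q (m r : ℕ) (v : Fin r → Fˣ) (u : Fˣ) :
    (mweta F ^ m * (List.ofFn fun i => mw (v i)).prod) * (mweta F * mw u) =
      mweta F ^ (m + 1) * (List.ofFn fun i : Fin (r + 1) => mw ((Fin.snoc v u : Fin (r+1) → Fˣ) i)).prod := by
  rw [ofFn_snoc_prod, pow_succ]
  rw [mul_assoc, ← mul_assoc ((List.ofFn fun i => mw (v i)).prod),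
    ← (comm_eta_prod r v).eq]
  noncomm_ring

lemma prodQ (r : ℕ) (v : Fin r → Fˣ) :
    (List.ofFn fun i => mweta F * mw (v i)).prod =
      mweta F ^ r * (List.ofFn fun i => mw (v i)).prod := by
  induction r with
  | zero => simp
  | succ r ih =>
    rw [List.ofFn_succ, List.ofFn_succ, List.prod_cons, List.prod_cons,
      ih (fun i => v i.succ), pow_succ']
    rw [mul_assoc, comm_swap ((comm_eta_mw_c (v 0)).pow_left r), ← mul_assoc,
      ← mul_assoc, mul_assoc (mweta F) (mweta F ^ r), ← mul_assoc (mweta F)]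

lemma mem_one_comp0 : (1 : KMW F) ∈ KMWcomp F 0 := by
  apply AddSubgroup.subset_closure
  exact ⟨0, 0, fun i => 1, by simp, by simp⟩

lemma mem_Q_comp0 (u : Fˣ) : mweta F * mw u ∈ KMWcomp F 0 := by
  apply AddSubgroup.subset_closure
  exact ⟨1, 1, fun _ => u, by simp, by simp [List.ofFn_succ]⟩

lemma mul_Q_comp0 {y : KMW F} (hy : y ∈ KMWcomp F 0) (u : Fˣ) :
    y * (mweta F * mw u) ∈ KMWcomp F 0 := by
  have key : KMWcomp F 0 ≤
      AddSubgroup.comap (AddMonoidHom.mulRight (mweta F * mw u)) (KMWcomp F 0) := by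
    rw [KMWcomp, AddSubgroup.closure_le]
    rintro x ⟨m, r, v, hr, rfl⟩
    show _ * (mweta F * mw u) ∈ KMWcomp F 0
    rw [gen_mul_Q]
    apply AddSubgroup.subset_closure
    exact ⟨m + 1, r + 1, Fin.snoc v u, by push_cast; omega, rfl⟩
  exact key hy

end Aux
set_option maxHeartbeats 1000000 in
set_option synthInstance.maxHeartbeats 200000 in
theorem stmt12 (F : Type) [Field F] :
    (∀ u v : Fˣ, (1 + mweta F * mw (u * v ^ 2)) = 1 + mweta F * mw u) ∧
    (∀ u : Fˣ,
      (1 + mweta F * mw u) + (1 + mweta F * mw (-u)) =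
        1 + (1 + mweta F * mw (-1 : Fˣ))) ∧
    (∀ (u v : Fˣ) (h : (u : F) + (v : F) ≠ 0),
      (1 + mweta F * mw u) + (1 + mweta F * mw v) =
        (1 + mweta F * mw (Units.mk0 ((u : F) + (v : F)) h)) +
          (1 + mweta F * mw (Units.mk0 ((u : F) + (v : F)) h * u * v))) ∧
    ∃ φ : GW F →+* KMW F,
      (∀ u : Fˣ, φ (gw u) = 1 + mweta F * mw u) ∧
      (∀ x : GW F, φ x ∈ KMWcomp F 0) ∧
      (∀ y ∈ KMWcomp F 0, ∃ x : GW F, φ x = y) := by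
  refine ⟨?_, ?_, ?_, ?_⟩
  · intro u v
    have h := congrArg (Subtype.val) (goal1S (F := F) u v)
    push_cast at h
    simpa using h
  · intro u
    have h := congrArg (Subtype.val) (goal2S (F := F) u)
    push_cast at h
    simpa using h
  · intro u v hv
    have h := congrArg (Subtype.val) (goal3S (F := F) u v hv)
    push_cast at h
    simpa using h
  · -- the ring homomorphism
    set f0 : MvPolynomial Fˣ ℤ →+* KMWsub F :=
      MvPolynomial.eval₂Hom (Int.castRingHom (KMWsub F)) (fun u => 1 + qs u) with hf0
    set f : MvPolynomial Fˣ ℤ →+* KMW F := (KMWsub F).subtype.comp f0 with hff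
    have hf : ∀ ⦃x y⦄, GWRel F x y → f x = f y := by
      intro x y hxy
      rw [hff]
      simp only [RingHom.comp_apply]
      refine congrArg _ ?_
      cases hxy with
      | sq u v =>
        simp only [hf0, MvPolynomial.eval₂Hom_X']
        exact goal1S u v
      | hyp u =>
        simp only [hf0, map_add, map_one, MvPolynomial.eval₂Hom_X']
        exact goal2S u
      | add u v h =>
        simp only [hf0, map_add, MvPolynomial.eval₂Hom_X']
        exact goal3S u v h
      | mul u v =>
        simp only [hf0, map_mul, MvPolynomial.eval₂Hom_X']
        exact mulS u v
      | one =>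
        simp only [hf0, map_one, MvPolynomial.eval₂Hom_X']
        rw [qs_one, add_zero]
    set Φ : GW F →+* KMW F := RingQuot.lift ⟨f, hf⟩ with hPhi
    have hpmk : ∀ p : MvPolynomial Fˣ ℤ, Φ (RingQuot.mkRingHom (GWRel F) p) = f p :=
      fun p => RingQuot.lift_mkRingHom_apply f hf p
    have hpgw : ∀ u : Fˣ, Φ (gw u) = 1 + mweta F * mw u := by
      intro u
      show Φ (RingQuot.mkRingHom (GWRel F) (MvPolynomial.X u)) = 1 + mweta F * mw u
      rw [hpmk]
      simp only [hff, RingHom.comp_apply, hf0, MvPolynomial.eval₂Hom_X']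
      simp
    refine ⟨Φ, hpgw, ?_, ?_⟩
    · intro x
      obtain ⟨p, rfl⟩ := RingQuot.mkRingHom_surjective (GWRel F) x
      rw [hpmk]
      induction p using MvPolynomial.induction_on with
      | C a =>
        have hC : (MvPolynomial.C a : MvPolynomial Fˣ ℤ) = ((a : ℤ) : MvPolynomial Fˣ ℤ) := by
          rw [← map_intCast (MvPolynomial.C : ℤ →+* MvPolynomial Fˣ ℤ) a, Int.cast_id]
        rw [hC, map_intCast, ← zsmul_one]
        exact AddSubgroup.zsmul_mem _ (mem_one_comp0) a
      | add p q hp hq =>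
        rw [map_add]
        exact AddSubgroup.add_mem _ hp hq
      | mul_X p u hp =>
        have hstep : f (p * MvPolynomial.X u) = f p + f p * (mweta F * mw u) := by
          rw [map_mul]
          have hx : f (MvPolynomial.X u) = 1 + mweta F * mw u := by
            simp only [hff, RingHom.comp_apply, hf0, MvPolynomial.eval₂Hom_X']
            simp
          rw [hx, mul_add, mul_one]
        rw [hstep]
        exact AddSubgroup.add_mem _ hp (mul_Q_comp0 hp u)
    · intro y hy
      have key : KMWcomp F 0 ≤ Φ.range.toAddSubgroup := by
        rw [KMWcomp, AddSubgroup.closure_le]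
        rintro x ⟨m, r, v, hr, rfl⟩
        have hrm : r = m := by exact_mod_cast sub_eq_zero.mp hr
        subst hrm
        refine ⟨(List.ofFn fun i => gw (v i) - 1).prod, ?_⟩
        rw [map_list_prod, List.map_ofFn]
        have hL : (List.ofFn (Φ ∘ fun i => gw (v i) - 1))
            = List.ofFn fun i => mweta F * mw (v i) := by
          congr 1
          funext i
          simp only [Function.comp_apply, map_sub, map_one, hpgw]
          rw [add_sub_cancel_left]
        rw [hL, prodQ]
      exact key hy
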